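/- Assume the noncommutative Grothendieck inequality: for a bounded bilinear form V on M_{n_A} × M_{n_B} there exist states φ₁, φ₂ on M_{n_A} and ψ₁, ψ₂ on M_{n_B} with |V(x,y)| ≤ ‖V‖ (φ₁(x*x)+φ₂(xx*))^{1/2} (ψ₁(y*y)+ψ₂(yy*))^{1/2} for all x, y. Then for any z ∈ M_{n_A n_B} with n_A ≤ n_B, ‖z‖₁ ≤ 2 n_A ‖V_z‖, where V_z(a,b) = tr(z(a⊗b)) and ‖V_z‖ = sup{|V_z(a,b)| : ‖a‖_∞ ≤ 1, ‖b‖_∞ ≤ 1}. -/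

import Mathlib

open Matrix
open scoped ComplexOrder Kronecker

noncomputable def opNorm {n : Type*} [Fintype n] [DecidableEq n] (A : Matrix n n ℂ) : ℝ :=
  ‖Matrix.toEuclideanCLM (𝕜 := ℂ) A‖

noncomputable def traceNorm {n : Type*} [Fintype n] [DecidableEq n] (A : Matrix n n ℂ) : ℝ :=
  ((Matrix.posSemidef_conjTranspose_mul_self A).1.eigenvectorUnitary.1 *
    diagonal (((↑) : ℝ → ℂ) ∘ Real.sqrt ∘ (Matrix.posSemidef_conjTranspose_mul_self A).1.eigenvalues) *
    (star (Matrix.posSemidef_conjTranspose_mul_self A).1.eigenvectorUnitary : Matrix n n ℂ)).trace.re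

noncomputable def epsNorm {nA nB : ℕ} (z : Matrix (Fin nA × Fin nB) (Fin nA × Fin nB) ℂ) : ℝ :=
  sSup {r : ℝ | ∃ a : Matrix (Fin nA) (Fin nA) ℂ, ∃ b : Matrix (Fin nB) (Fin nB) ℂ,
    opNorm a ≤ 1 ∧ opNorm b ≤ 1 ∧ r = ‖(z * (a ⊗ₖ b)).trace‖}

noncomputable def saEpsNorm {nA nB : ℕ} (z : Matrix (Fin nA × Fin nB) (Fin nA × Fin nB) ℂ) : ℝ :=
  sSup {r : ℝ | ∃ a : Matrix (Fin nA) (Fin nA) ℂ, ∃ b : Matrix (Fin nB) (Fin nB) ℂ,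
    a.IsHermitian ∧ b.IsHermitian ∧ opNorm a ≤ 1 ∧ opNorm b ≤ 1 ∧
    r = ‖(z * (a ⊗ₖ b)).trace‖}

/-- A finite family of matrices is a POVM if each member is positive semidefinite
and they sum to the identity. -/
def IsPOVM {n k : ℕ} (e : Fin k → Matrix (Fin n) (Fin n) ℂ) : Prop :=
  (∀ i, (e i).PosSemidef) ∧ ∑ i, e i = 1

/-- The local-operations (LO) distinguishability norm of a Hermitian matrix on a
bipartite system: the supremum over product POVMs of `∑ᵢⱼ |tr((eᵢ ⊗ fⱼ) z)|`. -/
noncomputable def LOnorm {nA nB : ℕ} (z : Matrix (Fin nA × Fin nB) (Fin nA × Fin nB) ℂ) : ℝ :=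
  sSup {r : ℝ | ∃ (kA kB : ℕ) (e : Fin kA → Matrix (Fin nA) (Fin nA) ℂ)
    (f : Fin kB → Matrix (Fin nB) (Fin nB) ℂ), IsPOVM e ∧ IsPOVM f ∧
    r = ∑ i, ∑ j, ‖((e i ⊗ₖ f j) * z).trace‖}

namespace NCGAux

noncomputable def gInv (t : ℝ) : ℝ := if t ≤ 0 then 0 else (Real.sqrt t)⁻¹

lemma pt1 {t : ℝ} (ht : 0 ≤ t) : gInv t * t = Real.sqrt t := by
  unfold gInv
  rcases le_or_gt t 0 with h | h
  · have ht0 : t = 0 := le_antisymm h ht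
    simp [ht0]
  · rw [if_neg (not_le.mpr h)]
    have hs : Real.sqrt t ≠ 0 := ne_of_gt (Real.sqrt_pos.mpr h)
    field_simp
    rw [Real.sq_sqrt ht]

lemma pt2 {t : ℝ} (ht : 0 ≤ t) : 0 ≤ 1 - gInv t * (t * gInv t) := by
  unfold gInv
  rcases le_or_gt t 0 with h | h
  · simp [h]
  · rw [if_neg (not_le.mpr h)]
    have hs : Real.sqrt t ≠ 0 := ne_of_gt (Real.sqrt_pos.mpr h)
    rw [← Real.mul_self_sqrt ht]
    field_simp
    rw [Real.sqrt_sq (Real.sqrt_nonneg t)]; simp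

lemma pt3 {t : ℝ} (ht : 0 ≤ t) :
    (gInv t * gInv t) * (t * (gInv t * gInv t)) = gInv t * gInv t := by
  unfold gInv
  rcases le_or_gt t 0 with h | h
  · simp [h]
  · rw [if_neg (not_le.mpr h)]
    have hs : Real.sqrt t ≠ 0 := ne_of_gt (Real.sqrt_pos.mpr h)
    rw [← Real.mul_self_sqrt ht]
    field_simp
    rw [Real.sqrt_sq (Real.sqrt_nonneg t)]

variable {N : Type*} [Fintype N] [DecidableEq N]

noncomputable def Phi (u : Matrix N N ℂ) (lam : N → ℝ) (f : ℝ → ℝ) : Matrix N N ℂ :=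
  u * Matrix.diagonal (fun i => ((f (lam i) : ℝ) : ℂ)) * star u

lemma conj_mul_conj {u a b : Matrix N N ℂ} (hu : star u * u = 1) :
    (u * a * star u) * (u * b * star u) = u * (a * b) * star u := by
  calc (u * a * star u) * (u * b * star u)
      = u * a * ((star u * u) * (b * star u)) := by simp only [mul_assoc]
    _ = u * (a * b) * star u := by rw [hu, one_mul]; simp only [mul_assoc]

lemma Phi_mul {u : Matrix N N ℂ} (hu : star u * u = 1) (lam : N → ℝ) (f g : ℝ → ℝ) :
    Phi u lam f * Phi u lam g = Phi u lam (fun t => f t * g t) := by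
  unfold Phi
  rw [conj_mul_conj hu, Matrix.diagonal_mul_diagonal]
  push_cast
  rfl

lemma Phi_trace {u : Matrix N N ℂ} (hu : star u * u = 1) (lam : N → ℝ) (f : ℝ → ℝ) :
    (Phi u lam f).trace = ∑ i, ((f (lam i) : ℝ) : ℂ) := by
  unfold Phi
  rw [Matrix.trace_mul_cycle, hu, one_mul, Matrix.trace_diagonal]

lemma Phi_conjTranspose (u : Matrix N N ℂ) (lam : N → ℝ) (f : ℝ → ℝ) :
    (Phi u lam f)ᴴ = Phi u lam f := by
  unfold Phi
  simp only [Matrix.star_eq_conjTranspose, Matrix.conjTranspose_mul,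
    Matrix.conjTranspose_conjTranspose, Matrix.diagonal_conjTranspose]
  rw [mul_assoc]
  congr 1
  ext i j
  simp [Matrix.diagonal_apply, Pi.star_apply, Complex.conj_ofReal]

lemma Phi_posSemidef (u : Matrix N N ℂ) {lam : N → ℝ} {f : ℝ → ℝ}
    (hf : ∀ i, 0 ≤ f (lam i)) : (Phi u lam f).PosSemidef := by
  have hd : (Matrix.diagonal (fun i => ((f (lam i) : ℝ) : ℂ))).PosSemidef := by
    refine Matrix.posSemidef_diagonal_iff.mpr fun i => ?_
    exact_mod_cast Complex.zero_le_real.mpr (hf i)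
  unfold Phi
  simpa only [Matrix.star_eq_conjTranspose] using hd.mul_mul_conjTranspose_same u

lemma Phi_sub (u : Matrix N N ℂ) (lam : N → ℝ) (f g : ℝ → ℝ) :
    Phi u lam f - Phi u lam g = Phi u lam (fun t => f t - g t) := by
  unfold Phi
  rw [← Matrix.sub_mul, ← Matrix.mul_sub, Matrix.diagonal_sub]
  push_cast
  rfl

lemma Phi_one {u : Matrix N N ℂ} (hu : u * star u = 1) (lam : N → ℝ) :
    Phi u lam (fun _ => 1) = 1 := by
  unfold Phi
  simp [hu]

lemma Phi_congr (u : Matrix N N ℂ) (lam : N → ℝ) {f g : ℝ → ℝ}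
    (h : ∀ i, f (lam i) = g (lam i)) : Phi u lam f = Phi u lam g := by
  unfold Phi
  congr 1
  · congr 1
    ext i j
    simp [Matrix.diagonal_apply, h i]

lemma diag_re_nonneg {A : Matrix N N ℂ} (hA : A.PosSemidef) (i : N) : 0 ≤ (A i i).re := by
  have := hA.re_dotProduct_nonneg (Pi.single i 1)
  simpa [dotProduct, mulVec, Pi.single_apply, RCLike.re_to_complex] using this

lemma trace_re_nonneg {A : Matrix N N ℂ} (hA : A.PosSemidef) : 0 ≤ A.trace.re := by
  rw [Matrix.trace, Complex.re_sum]
  exact Finset.sum_nonneg fun i _ => diag_re_nonneg hA i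

lemma trace_mul_re_nonneg {A B : Matrix N N ℂ} (hA : A.PosSemidef) (hB : B.PosSemidef) :
    0 ≤ (A * B).trace.re := by
  set S := Phi (hB.1.eigenvectorUnitary : Matrix N N ℂ) hB.1.eigenvalues Real.sqrt with hSdef
  have hu1 : star (hB.1.eigenvectorUnitary : Matrix N N ℂ) * hB.1.eigenvectorUnitary = 1 :=
    Matrix.mem_unitaryGroup_iff'.mp hB.1.eigenvectorUnitary.2
  have hC : Sᴴ = S := Phi_conjTranspose _ _ _
  have hCC : S * S = B := by
    rw [hSdef, Phi_mul hu1,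
      Phi_congr _ _ (g := fun t => t) (fun i => Real.mul_self_sqrt (hB.eigenvalues_nonneg i))]
    conv_rhs => rw [hB.1.spectral_theorem]
    rfl
  have h1 : (A * B).trace = (Sᴴ * A * S).trace := by
    rw [hC]
    calc (A * B).trace = (A * (S * S)).trace := by rw [hCC]
      _ = ((A * S) * S).trace := by rw [mul_assoc]
      _ = (S * (A * S)).trace := (Matrix.trace_mul_comm _ _)
      _ = (S * A * S).trace := by rw [mul_assoc]
  rw [h1]
  exact trace_re_nonneg (hA.conjTranspose_mul_mul_same _)

lemma trace_state_le {ψ M : Matrix N N ℂ} (hψ : ψ.PosSemidef) (hψt : ψ.trace = 1)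
    (hM : (1 - M).PosSemidef) : (ψ * M).trace.re ≤ 1 := by
  have h0 : 0 ≤ (ψ * (1 - M)).trace.re := trace_mul_re_nonneg hψ hM
  rw [mul_sub, mul_one, Matrix.trace_sub, Complex.sub_re, hψt] at h0
  simp only [Complex.one_re] at h0
  linarith

lemma stdBasisMatrix_conjTranspose {n : Type*} [Fintype n] [DecidableEq n] (i j : n) :
    (Matrix.single i j (1 : ℂ))ᴴ = Matrix.single j i 1 := by
  ext a b
  simp [Matrix.conjTranspose_apply, Matrix.single, and_comm]

lemma trace_mul_stdBasisMatrix {n : Type*} [Fintype n] [DecidableEq n]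
    (A : Matrix n n ℂ) (j : n) : (A * Matrix.single j j (1 : ℂ)).trace = A j j := by
  rw [Matrix.trace]
  have : ∀ k, (A * Matrix.single j j (1 : ℂ)).diag k
      = if k = j then A k j else 0 := by
    intro k
    simp [Matrix.diag, Matrix.mul_apply, Matrix.single, ite_and, eq_comm]
  simp only [this]
  simp

end NCGAux

set_option maxHeartbeats 2000000

/-- the noncommutative Grothendieck inequality (assumed for all
bilinear forms on `M_{n_A} × M_{n_B}`) implies `‖z‖₁ ≤ 2 n_A ‖V_z‖` when `n_A ≤ n_B`. -/
theorem ncgt_implies_traceNorm_bound (nA nB : ℕ) (hn : nA ≤ nB)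
    (NCG : ∀ V : Matrix (Fin nA) (Fin nA) ℂ →ₗ[ℂ] Matrix (Fin nB) (Fin nB) ℂ →ₗ[ℂ] ℂ,
      ∃ φ₁ φ₂ : Matrix (Fin nA) (Fin nA) ℂ, ∃ ψ₁ ψ₂ : Matrix (Fin nB) (Fin nB) ℂ,
        φ₁.PosSemidef ∧ φ₁.trace = 1 ∧ φ₂.PosSemidef ∧ φ₂.trace = 1 ∧
        ψ₁.PosSemidef ∧ ψ₁.trace = 1 ∧ ψ₂.PosSemidef ∧ ψ₂.trace = 1 ∧
        ∀ x y, ‖V x y‖ ≤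
          (sSup {r : ℝ | ∃ a b, opNorm a ≤ 1 ∧ opNorm b ≤ 1 ∧ r = ‖V a b‖})
          * Real.sqrt (((φ₁ * (xᴴ * x)).trace).re + ((φ₂ * (x * xᴴ)).trace).re)
          * Real.sqrt (((ψ₁ * (yᴴ * y)).trace).re + ((ψ₂ * (y * yᴴ)).trace).re))
    (z : Matrix (Fin nA × Fin nB) (Fin nA × Fin nB) ℂ) :
    traceNorm z ≤ 2 * (nA : ℝ) * epsNorm z := by
  classical
  -- the bilinear form V_z
  set V : Matrix (Fin nA) (Fin nA) ℂ →ₗ[ℂ] Matrix (Fin nB) (Fin nB) ℂ →ₗ[ℂ] ℂ :=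
    LinearMap.mk₂ ℂ (fun a b => (z * (a ⊗ₖ b)).trace)
      (fun a a' b => by simp [Matrix.add_kronecker, Matrix.mul_add])
      (fun c a b => by simp [Matrix.smul_kronecker, Matrix.mul_smul])
      (fun a b b' => by simp [Matrix.kronecker_add, Matrix.mul_add])
      (fun c a b => by simp [Matrix.kronecker_smul, Matrix.mul_smul])
    with hVdef
  obtain ⟨φ₁, φ₂, ψ₁, ψ₂, hφ₁, hφ₁t, hφ₂, hφ₂t, hψ₁, hψ₁t, hψ₂, hψ₂t, hV⟩ := NCG V
  have hVab : ∀ a b, V a b = (z * (a ⊗ₖ b)).trace := fun a b => rfl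
  have hKeq : (sSup {r : ℝ | ∃ a b, opNorm a ≤ 1 ∧ opNorm b ≤ 1 ∧ r = ‖V a b‖})
      = epsNorm z := by unfold epsNorm; simp only [hVab]
  rw [hKeq] at hV
  set K := epsNorm z with hK
  -- K is nonnegative
  have hK0 : 0 ≤ K := by
    have h11 := hV 1 1
    simp only [Matrix.conjTranspose_one, Matrix.mul_one, Matrix.one_mul] at h11
    rw [hφ₁t, hφ₂t, hψ₁t, hψ₂t] at h11
    simp only [Complex.one_re] at h11
    have hs2 : Real.sqrt (1 + 1) * Real.sqrt (1 + 1) = 2 := by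
      rw [Real.mul_self_sqrt (by norm_num)]; norm_num
    have habs : (0:ℝ) ≤ ‖V 1 1‖ := norm_nonneg _
    nlinarith [Real.sqrt_nonneg (1 + 1 : ℝ)]
  -- spectral setup
  have hH : (zᴴ * z).PosSemidef := Matrix.posSemidef_conjTranspose_mul_self z
  set u : Matrix (Fin nA × Fin nB) (Fin nA × Fin nB) ℂ := ↑hH.1.eigenvectorUnitary with hudef
  set lam : Fin nA × Fin nB → ℝ := hH.1.eigenvalues with hlamdef
  have hu1 : star u * u = 1 := Matrix.mem_unitaryGroup_iff'.mp hH.1.eigenvectorUnitary.2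
  have hu2 : u * star u = 1 := Matrix.mem_unitaryGroup_iff.mp hH.1.eigenvectorUnitary.2
  have hlam : ∀ i, 0 ≤ lam i := hH.eigenvalues_nonneg
  have hid : NCGAux.Phi u lam (fun t => t) = zᴴ * z := by
    conv_rhs => rw [hH.1.spectral_theorem]
    rfl
  have hS : traceNorm z = (NCGAux.Phi u lam Real.sqrt).trace.re := rfl
  -- the contraction W attaining the trace norm
  set W : Matrix (Fin nA × Fin nB) (Fin nA × Fin nB) ℂ :=
    NCGAux.Phi u lam NCGAux.gInv * zᴴ with hW
  have hWher : Wᴴ = z * NCGAux.Phi u lam NCGAux.gInv := by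
    rw [hW, Matrix.conjTranspose_mul, Matrix.conjTranspose_conjTranspose,
      NCGAux.Phi_conjTranspose]
  have htrace : (z * W).trace = (NCGAux.Phi u lam Real.sqrt).trace := by
    rw [hW, ← Matrix.mul_assoc, Matrix.trace_mul_comm, ← Matrix.mul_assoc, ← hid,
      Matrix.trace_mul_comm, NCGAux.Phi_mul hu1,
      NCGAux.Phi_congr u lam (fun i => NCGAux.pt1 (hlam i))]
  have htn : traceNorm z = ((z * W).trace).re := by
    rw [htrace, ← hS]
  -- 1 - W Wᴴ is PSD
  have hWWt : W * Wᴴ = NCGAux.Phi u lam (fun t => NCGAux.gInv t * (t * NCGAux.gInv t)) := by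
    rw [hWher, hW, Matrix.mul_assoc, ← Matrix.mul_assoc zᴴ z, ← hid,
      NCGAux.Phi_mul hu1, NCGAux.Phi_mul hu1]
  have hP1 : ((1 : Matrix (Fin nA × Fin nB) (Fin nA × Fin nB) ℂ) - W * Wᴴ).PosSemidef := by
    rw [hWWt, ← NCGAux.Phi_one hu2 lam, NCGAux.Phi_sub]
    exact NCGAux.Phi_posSemidef u (fun i => NCGAux.pt2 (hlam i))
  -- 1 - Wᴴ W is PSD
  have hMdef : Wᴴ * W
      = z * NCGAux.Phi u lam (fun t => NCGAux.gInv t * NCGAux.gInv t) * zᴴ := by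
    rw [hWher, hW, Matrix.mul_assoc,
      ← Matrix.mul_assoc (NCGAux.Phi u lam NCGAux.gInv) (NCGAux.Phi u lam NCGAux.gInv) zᴴ,
      NCGAux.Phi_mul hu1, ← Matrix.mul_assoc]
  have hMM : (Wᴴ * W) * (Wᴴ * W) = Wᴴ * W := by
    rw [hMdef]
    have h1 : (z * NCGAux.Phi u lam (fun t => NCGAux.gInv t * NCGAux.gInv t) * zᴴ)
        * (z * NCGAux.Phi u lam (fun t => NCGAux.gInv t * NCGAux.gInv t) * zᴴ)
        = z * (NCGAux.Phi u lam (fun t => NCGAux.gInv t * NCGAux.gInv t)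
            * ((zᴴ * z) * NCGAux.Phi u lam (fun t => NCGAux.gInv t * NCGAux.gInv t))) * zᴴ := by
      simp only [Matrix.mul_assoc]
    rw [h1, ← hid, NCGAux.Phi_mul hu1, NCGAux.Phi_mul hu1,
      NCGAux.Phi_congr u lam (g := fun t => NCGAux.gInv t * NCGAux.gInv t) (fun i => NCGAux.pt3 (hlam i))]
  have hMher : (Wᴴ * W)ᴴ = Wᴴ * W := by
    rw [Matrix.conjTranspose_mul, Matrix.conjTranspose_conjTranspose]
  have hP2 : ((1 : Matrix (Fin nA × Fin nB) (Fin nA × Fin nB) ℂ) - Wᴴ * W).PosSemidef := by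
    have key : ((1 - Wᴴ * W)ᴴ) * (1 - Wᴴ * W) = 1 - Wᴴ * W := by
      rw [Matrix.conjTranspose_sub, Matrix.conjTranspose_one, hMher]
      calc (1 - Wᴴ * W) * (1 - Wᴴ * W)
          = 1 - Wᴴ * W - Wᴴ * W + (Wᴴ * W) * (Wᴴ * W) := by noncomm_ring
        _ = 1 - Wᴴ * W := by rw [hMM]; abel
    have := Matrix.posSemidef_conjTranspose_mul_self (1 - Wᴴ * W)
    rwa [key] at this
  -- block decomposition
  set E : Fin nA → Fin nA → Matrix (Fin nA) (Fin nA) ℂ :=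
    fun i j => Matrix.single i j 1 with hE
  set Wb : Fin nA → Fin nA → Matrix (Fin nB) (Fin nB) ℂ :=
    fun i j => Matrix.of (fun q s => W (i, q) (j, s)) with hWb
  have hWsum : W = ∑ i : Fin nA, ∑ j : Fin nA, (E i j) ⊗ₖ Wb i j := by
    ext ⟨p, q⟩ ⟨r, s⟩
    simp [Matrix.sum_apply, Matrix.kroneckerMap_apply, hE, hWb, Matrix.single,
      ite_and, Finset.sum_ite_eq, Finset.sum_ite_eq']
  have htr2 : (z * W).trace = ∑ i : Fin nA, ∑ j : Fin nA, V (E i j) (Wb i j) := by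
    conv_lhs => rw [hWsum]
    rw [Finset.mul_sum, Matrix.trace_sum]
    refine Finset.sum_congr rfl fun i _ => ?_
    rw [Finset.mul_sum, Matrix.trace_sum]
    exact Finset.sum_congr rfl fun j _ => (hVab _ _).symm
  -- per-term NCG estimate
  have hterm : ∀ i j : Fin nA, ‖V (E i j) (Wb i j)‖
      ≤ K * (Real.sqrt ((φ₁ j j).re + (φ₂ i i).re)
        * Real.sqrt ((ψ₁ * ((Wb i j)ᴴ * Wb i j)).trace.re
            + (ψ₂ * (Wb i j * (Wb i j)ᴴ)).trace.re)) := by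
    intro i j
    have h := hV (E i j) (Wb i j)
    have e1 : (E i j)ᴴ * E i j = Matrix.single j j (1 : ℂ) := by
      rw [hE]
      simp [NCGAux.stdBasisMatrix_conjTranspose, Matrix.single_mul_single_same]
    have e2 : E i j * (E i j)ᴴ = Matrix.single i i (1 : ℂ) := by
      rw [hE]
      simp [NCGAux.stdBasisMatrix_conjTranspose, Matrix.single_mul_single_same]
    rw [e1, e2, NCGAux.trace_mul_stdBasisMatrix, NCGAux.trace_mul_stdBasisMatrix,
      mul_assoc] at h
    exact h
  -- block sums of Wᴴ W and W Wᴴ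
  have hMj : ∀ j : Fin nA, ∑ i : Fin nA, (Wb i j)ᴴ * Wb i j
      = (Wᴴ * W).submatrix (fun q : Fin nB => (j, q)) (fun q : Fin nB => (j, q)) := by
    intro j
    ext q s
    simp only [Matrix.sum_apply, Matrix.mul_apply, Matrix.conjTranspose_apply, hWb,
      Matrix.of_apply, Matrix.submatrix_apply, Fintype.sum_prod_type]
  have hMi : ∀ i : Fin nA, ∑ j : Fin nA, Wb i j * (Wb i j)ᴴ
      = (W * Wᴴ).submatrix (fun q : Fin nB => (i, q)) (fun q : Fin nB => (i, q)) := by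
    intro i
    ext q s
    simp only [Matrix.sum_apply, Matrix.mul_apply, Matrix.conjTranspose_apply, hWb,
      Matrix.of_apply, Matrix.submatrix_apply, Fintype.sum_prod_type]
  have hsub1 : ∀ j : Fin nA,
      ((1 : Matrix (Fin nB) (Fin nB) ℂ) - ∑ i : Fin nA, (Wb i j)ᴴ * Wb i j).PosSemidef := by
    intro j
    rw [hMj j]
    have heq : (1 : Matrix (Fin nB) (Fin nB) ℂ)
        - (Wᴴ * W).submatrix (fun q : Fin nB => (j, q)) (fun q => (j, q))
        = (1 - Wᴴ * W).submatrix (fun q : Fin nB => (j, q)) (fun q => (j, q)) := by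
      ext q s
      simp [Matrix.submatrix_apply, Matrix.sub_apply, Matrix.one_apply, Prod.ext_iff]
    rw [heq]
    exact hP2.submatrix _
  have hsub2 : ∀ i : Fin nA,
      ((1 : Matrix (Fin nB) (Fin nB) ℂ) - ∑ j : Fin nA, Wb i j * (Wb i j)ᴴ).PosSemidef := by
    intro i
    rw [hMi i]
    have heq : (1 : Matrix (Fin nB) (Fin nB) ℂ)
        - (W * Wᴴ).submatrix (fun q : Fin nB => (i, q)) (fun q => (i, q))
        = (1 - W * Wᴴ).submatrix (fun q : Fin nB => (i, q)) (fun q => (i, q)) := by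
      ext q s
      simp [Matrix.submatrix_apply, Matrix.sub_apply, Matrix.one_apply, Prod.ext_iff]
    rw [heq]
    exact hP1.submatrix _
  have hβ1 : ∀ j : Fin nA, ∑ i : Fin nA, (ψ₁ * ((Wb i j)ᴴ * Wb i j)).trace.re ≤ 1 := by
    intro j
    have heq : ∑ i : Fin nA, (ψ₁ * ((Wb i j)ᴴ * Wb i j)).trace.re
        = (ψ₁ * ∑ i : Fin nA, (Wb i j)ᴴ * Wb i j).trace.re := by
      rw [Finset.mul_sum, Matrix.trace_sum, Complex.re_sum]
    rw [heq]
    exact NCGAux.trace_state_le hψ₁ hψ₁t (hsub1 j)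
  have hβ2 : ∀ i : Fin nA, ∑ j : Fin nA, (ψ₂ * (Wb i j * (Wb i j)ᴴ)).trace.re ≤ 1 := by
    intro i
    have heq : ∑ j : Fin nA, (ψ₂ * (Wb i j * (Wb i j)ᴴ)).trace.re
        = (ψ₂ * ∑ j : Fin nA, Wb i j * (Wb i j)ᴴ).trace.re := by
      rw [Finset.mul_sum, Matrix.trace_sum, Complex.re_sum]
    rw [heq]
    exact NCGAux.trace_state_le hψ₂ hψ₂t (hsub2 i)
  -- diagonal sums of the states on the A side
  have ht1 : ∑ j : Fin nA, (φ₁ j j).re = 1 := by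
    have h : (φ₁.trace).re = 1 := by rw [hφ₁t, Complex.one_re]
    rw [Matrix.trace, Complex.re_sum] at h
    exact h
  have ht2 : ∑ j : Fin nA, (φ₂ j j).re = 1 := by
    have h : (φ₂.trace).re = 1 := by rw [hφ₂t, Complex.one_re]
    rw [Matrix.trace, Complex.re_sum] at h
    exact h
  -- Cauchy-Schwarz assembly
  have hfinal : ∑ i : Fin nA, ∑ j : Fin nA, ‖V (E i j) (Wb i j)‖
      ≤ 2 * (nA : ℝ) * K := by
    set F : Fin nA × Fin nA → ℝ := fun p => (φ₁ p.2 p.2).re + (φ₂ p.1 p.1).re with hF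
    set G : Fin nA × Fin nA → ℝ := fun p =>
      (ψ₁ * ((Wb p.1 p.2)ᴴ * Wb p.1 p.2)).trace.re
        + (ψ₂ * (Wb p.1 p.2 * (Wb p.1 p.2)ᴴ)).trace.re with hG
    have hFpos : ∀ p, 0 ≤ F p := fun p =>
      add_nonneg (NCGAux.diag_re_nonneg hφ₁ _) (NCGAux.diag_re_nonneg hφ₂ _)
    have hGpos : ∀ p, 0 ≤ G p := fun p => add_nonneg
      (NCGAux.trace_mul_re_nonneg hψ₁ (Matrix.posSemidef_conjTranspose_mul_self _))
      (NCGAux.trace_mul_re_nonneg hψ₂ (Matrix.posSemidef_self_mul_conjTranspose _))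
    have hCS : ∑ p : Fin nA × Fin nA, Real.sqrt (F p) * Real.sqrt (G p)
        ≤ Real.sqrt (∑ p, F p) * Real.sqrt (∑ p, G p) :=
      Real.sum_sqrt_mul_sqrt_le _ hFpos hGpos
    have hFs : ∑ p : Fin nA × Fin nA, F p = 2 * (nA : ℝ) := by
      rw [hF, Finset.sum_add_distrib]
      have a1 : ∑ p : Fin nA × Fin nA, (φ₁ p.2 p.2).re = (nA : ℝ) := by
        rw [Fintype.sum_prod_type]
        simp [ht1]
      have a2 : ∑ p : Fin nA × Fin nA, (φ₂ p.1 p.1).re = (nA : ℝ) := by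
        rw [Fintype.sum_prod_type]
        simp only [Finset.sum_const, Finset.card_univ, Fintype.card_fin, nsmul_eq_mul]
        rw [← Finset.mul_sum, ht2, mul_one]
      rw [a1, a2]
      ring
    have hGs : ∑ p : Fin nA × Fin nA, G p ≤ 2 * (nA : ℝ) := by
      rw [hG, Finset.sum_add_distrib]
      have b1 : ∑ p : Fin nA × Fin nA, (ψ₁ * ((Wb p.1 p.2)ᴴ * Wb p.1 p.2)).trace.re
          ≤ (nA : ℝ) := by
        rw [Fintype.sum_prod_type, Finset.sum_comm]
        calc ∑ j : Fin nA, ∑ i : Fin nA, (ψ₁ * ((Wb i j)ᴴ * Wb i j)).trace.re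
            ≤ ∑ _j : Fin nA, (1 : ℝ) := Finset.sum_le_sum fun j _ => hβ1 j
          _ = (nA : ℝ) := by simp
      have b2 : ∑ p : Fin nA × Fin nA, (ψ₂ * (Wb p.1 p.2 * (Wb p.1 p.2)ᴴ)).trace.re
          ≤ (nA : ℝ) := by
        rw [Fintype.sum_prod_type]
        calc ∑ i : Fin nA, ∑ j : Fin nA, (ψ₂ * (Wb i j * (Wb i j)ᴴ)).trace.re
            ≤ ∑ _i : Fin nA, (1 : ℝ) := Finset.sum_le_sum fun i _ => hβ2 i
          _ = (nA : ℝ) := by simp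
      linarith
    calc ∑ i : Fin nA, ∑ j : Fin nA, ‖V (E i j) (Wb i j)‖
        ≤ ∑ i : Fin nA, ∑ j : Fin nA, K * (Real.sqrt ((φ₁ j j).re + (φ₂ i i).re)
            * Real.sqrt ((ψ₁ * ((Wb i j)ᴴ * Wb i j)).trace.re
              + (ψ₂ * (Wb i j * (Wb i j)ᴴ)).trace.re)) :=
          Finset.sum_le_sum fun i _ => Finset.sum_le_sum fun j _ => hterm i j
      _ = K * ∑ p : Fin nA × Fin nA, Real.sqrt (F p) * Real.sqrt (G p) := by
          rw [Fintype.sum_prod_type, Finset.mul_sum]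
          exact Finset.sum_congr rfl fun i _ => by rw [Finset.mul_sum]
      _ ≤ K * (Real.sqrt (∑ p, F p) * Real.sqrt (∑ p, G p)) :=
          mul_le_mul_of_nonneg_left hCS hK0
      _ ≤ K * (Real.sqrt (2 * (nA : ℝ)) * Real.sqrt (2 * (nA : ℝ))) := by
          have := Real.sqrt_le_sqrt hGs
          rw [hFs]
          have h2 : (0:ℝ) ≤ Real.sqrt (2 * (nA : ℝ)) := Real.sqrt_nonneg _
          exact mul_le_mul_of_nonneg_left
            (mul_le_mul_of_nonneg_left this h2) hK0
      _ = 2 * (nA : ℝ) * K := by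
          rw [Real.mul_self_sqrt (by positivity)]
          ring
  calc traceNorm z = ((z * W).trace).re := htn
    _ ≤ ‖(z * W).trace‖ := Complex.re_le_norm _
    _ = ‖∑ i : Fin nA, ∑ j : Fin nA, V (E i j) (Wb i j)‖ := by rw [htr2]
    _ ≤ ∑ i : Fin nA, ∑ j : Fin nA, ‖V (E i j) (Wb i j)‖ :=
        (norm_sum_le _ _).trans
          (Finset.sum_le_sum fun i _ => norm_sum_le _ _)
    _ ≤ 2 * (nA : ℝ) * K := hfinal
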